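/- Let S be a finite nonempty set and f : S → ZMod 2 with exactly one quarter of the elements marked: 4 · |{s ∈ S | f s = 1}| = |S|. For s ∈ S define the single-shot Grover amplitude a(s) = (1/√|S|) · ((-1 : ℝ)^{(f s).val} − (2/|S|) · ∑_{t ∈ S} (-1)^{(f t).val}). Then a(s) = 0 for every unmarked s (those with f s = 0), and ∑_{s ∈ S, f s = 1} a(s)² = 1. (Hence a single iteration of Grover's algorithm returns a marked element with certainty.) -/

import Mathlib

open BigOperators

theorem stmt14 {S : Type*} [Fintype S] [Nonempty S] (f : S → ZMod 2)
    (hquarter : 4 * (Finset.univ.filter (fun s : S => f s = 1)).card = Fintype.card S)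
    (a : S → ℝ)
    (ha : ∀ s : S, a s = (1 / Real.sqrt (Fintype.card S)) *
        ((-1 : ℝ) ^ (f s).val
          - (2 / (Fintype.card S : ℝ)) * ∑ t : S, (-1 : ℝ) ^ (f t).val)) :
    (∀ s : S, f s = 0 → a s = 0) ∧
    ∑ s ∈ Finset.univ.filter (fun s : S => f s = 1), (a s) ^ 2 = 1 := by
  set N : ℕ := Fintype.card S with hN
  set M : ℕ := (Finset.univ.filter (fun s : S => f s = 1)).card with hM
  have hNpos : 0 < N := Fintype.card_pos
  have hNne : (N : ℝ) ≠ 0 := Nat.cast_ne_zero.mpr hNpos.ne'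
  have hsum : ∑ t : S, (-1 : ℝ) ^ (f t).val = (N : ℝ) - 2 * M := by
    have h1 : ∀ t : S, (-1 : ℝ) ^ (f t).val = 1 - 2 * (if f t = 1 then (1:ℝ) else 0) := by
      intro t
      rcases (by decide : ∀ x : ZMod 2, x = 0 ∨ x = 1) (f t) with h | h
      · simp [h]
      · rw [h, show ((1:ZMod 2)).val = 1 from rfl]; norm_num
    simp only [h1]
    rw [Finset.sum_sub_distrib, Finset.sum_const, ← Finset.mul_sum, Finset.sum_boole]
    simp [hN, hM, Finset.filter_congr_decidable]
  have h4 : (N : ℝ) = 4 * M := by exact_mod_cast hquarter.symm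
  have hMne : (M : ℝ) ≠ 0 := by
    intro h; rw [h, mul_zero] at h4; exact hNne h4
  have hkey : (2 / (N : ℝ)) * ((N : ℝ) - 2 * M) = 1 := by
    rw [h4]; field_simp; ring
  have hsq : Real.sqrt N ^ 2 = N := Real.sq_sqrt (Nat.cast_nonneg N)
  have hsne : Real.sqrt N ≠ 0 := by positivity
  constructor
  · intro s hs
    rw [ha s, hsum, hkey, hs]
    simp
  · have hmark : ∀ s : S, f s = 1 → a s ^ 2 = 4 / N := by
      intro s hs
      rw [ha s, hsum, hkey, hs]
      have : ((1:ZMod 2)).val = 1 := rfl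
      rw [this]
      field_simp
      norm_num
      ring
    rw [Finset.sum_congr rfl (fun s hs => hmark s (Finset.mem_filter.mp hs).2)]
    rw [Finset.sum_const, ← hM, h4]
    field_simp
    ring
    exact mul_inv_cancel₀ hMne
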